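/- Moderate severe revision decomposes into severe antiwithdrawal followed by lexicographic revision: for every total preorder C and formula P, C msev(P) is equivalent to C sev(P) lex(P). -/

import Mathlib

open Set
open scoped Classical

variable {M : Type*}

namespace BeliefRevision

/-- `minSet C P`: the minimal models of `P` according to the total preorder `C`,
i.e. `C(i) ∩ Mod(P)` for the least `i` making this nonempty. -/
noncomputable def minSet : List (Set M) → Set M → Set M
  | [], _ => ∅
  | X :: rest, P => if (X ∩ P).Nonempty then X ∩ P else minSet rest P

/-- Equivalence of total preorders: same minimal models for every formula. -/
def equivC (C C' : List (Set M)) : Prop :=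
  ∀ P : Set M, minSet C P = minSet C' P

/-- A total preorder: an ordered partition (empty classes allowed) of all models. -/
def IsPartition (C : List (Set M)) : Prop :=
  C.Pairwise Disjoint ∧ C.foldr (· ∪ ·) ∅ = Set.univ

/-- Lexicographic revision. -/
def lex (C : List (Set M)) (L : Set M) : List (Set M) :=
  C.map (· ∩ L) ++ C.map (· \ L)

/-- Refinement. -/
def refi (C : List (Set M)) (R : Set M) : List (Set M) :=
  C.flatMap fun X => [X ∩ R, X \ R]

/-- Natural revision: `[C(i)∩P, C(0),...,C(i-1), C(i)\P, C(i+1),...,C(m)]`. -/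
noncomputable def natr : List (Set M) → Set M → List (Set M)
  | [], _ => []
  | X :: rest, P =>
    if (X ∩ P).Nonempty then (X ∩ P) :: (X \ P) :: rest
    else
      match natr rest P with
      | a :: r => a :: X :: r
      | [] => [X]

/-- Severe antiwithdrawal: merge classes `0..i` where `i` is least with `C(i)∩P ≠ ∅`. -/
noncomputable def sevw : List (Set M) → Set M → List (Set M)
  | [], _ => []
  | X :: rest, P =>
    if (X ∩ P).Nonempty then X :: rest
    else
      match sevw rest P with
      | a :: r => (X ∪ a) :: r
      | [] => [X]

/-- Restrained revision. -/
noncomputable def res : List (Set M) → Set M → List (Set M)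
  | [], _ => []
  | X :: rest, P =>
    if (X ∩ P).Nonempty then
      (X ∩ P) :: (X \ P) :: rest.flatMap (fun Y => [Y ∩ P, Y \ P])
    else
      match res rest P with
      | a :: r => a :: (X ∩ P) :: (X \ P) :: r
      | [] => [X ∩ P, X \ P]

/-- Very radical revision. -/
def rad (C : List (Set M)) (P : Set M) : List (Set M) :=
  C.map (· ∩ P) ++ [C.foldr (· ∪ ·) ∅ \ P]

/-- Severe revision: `[C(i)∩P, (C(0)∪...∪C(i))\P, C(i+1),...,C(m)]`. -/
noncomputable def sevr : List (Set M) → Set M → List (Set M)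
  | [], _ => []
  | X :: rest, P =>
    if (X ∩ P).Nonempty then (X ∩ P) :: (X \ P) :: rest
    else
      match sevr rest P with
      | a :: b :: r => a :: (X ∪ b) :: r
      | l => X :: l

/-- Moderate severe revision. -/
noncomputable def msev (C : List (Set M)) (P : Set M) : List (Set M) :=
  C.map (· ∩ P) ++ (sevw C P).map (· \ P)

/-- Merge `A` with the first nonempty class of the list (helper for `psev`). -/
noncomputable def mergeJ (A : Set M) : List (Set M) → List (Set M)
  | [] => [A]
  | Y :: r => if Y.Nonempty then (A ∪ Y) :: r else mergeJ A r

/-- Plain severe revision: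
`[C(i)∩P, C(0)∪...∪(C(i)\P)∪C(j), C(j+1),...,C(m)]` with `i` least with
`C(i)∩P ≠ ∅` and `j` the least index `> i` with `C(j) ≠ ∅`. -/
noncomputable def psev : List (Set M) → Set M → List (Set M)
  | [], _ => []
  | X :: rest, P =>
    if (X ∩ P).Nonempty then (X ∩ P) :: mergeJ (X \ P) rest
    else
      match psev rest P with
      | a :: b :: r => a :: (X ∪ b) :: r
      | l => X :: l

/-- Full meet revision. -/
noncomputable def full (C : List (Set M)) (P : Set M) : List (Set M) :=
  [minSet C P, Set.univ \ minSet C P]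

/-- `maxset F [F₁,...,Fₖ]`: conjoin each `Fᵢ` in order whenever consistent. -/
noncomputable def maxset : Set M → List (Set M) → Set M
  | F, [] => F
  | F, L :: rest => maxset (if (F ∩ L).Nonempty then F ∩ L else F) rest

/-- The underformula `under(S; Lₙ,...,L₁)`. -/
noncomputable def under : Set M → List (Set M) → Set M
  | _, [] => Set.univ
  | S, L :: rest =>
    if (S ∩ L).Nonempty then L ∩ under (S ∩ L) rest else L ∪ under S rest

/-- `upTo C S = C(0) ∪ ... ∪ C(i)` where `i` is least with `C(i)∩S ≠ ∅`. -/
noncomputable def upTo : List (Set M) → Set M → Set M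
  | [], _ => ∅
  | X :: rest, S => if (X ∩ S).Nonempty then X else X ∪ upTo rest S

noncomputable def longestAux : Set M → List (Set M) → Set M
  | A, [] => A
  | A, L :: rest => if (A ∩ L).Nonempty then longestAux (A ∩ L) rest else A

/-- Longest consistent conjunction of a sequence of formulas. -/
noncomputable def longest : List (Set M) → Set M
  | [] => Set.univ
  | L :: rest => longestAux L rest

/-- `rev` is a bottom-refining revision on `(C,P)`: it is a revision
(`min(C rev(P),⊤) = min(C,P)`) and, whenever `C(0)∩Mod(P) ≠ ∅`, class zero of
the result is `C(0)∩Mod(P)` and class one is `C(0)\Mod(P)`. -/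
noncomputable def BottomRefining (rev : List (Set M) → Set M → List (Set M))
    (C : List (Set M)) (P : Set M) : Prop :=
  minSet (rev C P) Set.univ = minSet C P ∧
  ((C.getD 0 ∅ ∩ P).Nonempty →
    (rev C P).getD 0 ∅ = C.getD 0 ∅ ∩ P ∧
    (rev C P).getD 1 ∅ = C.getD 0 ∅ \ P)


lemma sevw_ne_nil (C : List (Set M)) (P : Set M) (h : C ≠ []) : sevw C P ≠ [] := by
  match C with
  | X :: rest =>
    unfold sevw
    split
    · simp
    · match hs : sevw rest P with
      | [] => simp
      | a :: r => simp

lemma mem_foldr_union {m : M} : ∀ C : List (Set M), m ∈ C.foldr (· ∪ ·) ∅ →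
    ∃ X ∈ C, m ∈ X := by
  intro C
  induction C with
  | nil => intro h; exact absurd h (by simp)
  | cons X rest ih =>
    intro h
    rcases (Set.mem_union _ _ _).mp h with h1 | h2
    · exact ⟨X, List.mem_cons_self, h1⟩
    · obtain ⟨Y, hY, hmY⟩ := ih h2
      exact ⟨Y, List.mem_cons_of_mem _ hY, hmY⟩

lemma key (P : Set M) : ∀ C : List (Set M), (∃ X ∈ C, (X ∩ P).Nonempty) →
    ∀ (L : List (Set M)) (Q : Set M),
      minSet (C.map (· ∩ P) ++ L) Q = minSet ((sevw C P).map (· ∩ P) ++ L) Q := by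
  intro C
  induction C with
  | nil => rintro ⟨X, hX, _⟩; cases hX
  | cons X rest ih =>
    rintro ⟨Y, hY, hYP⟩ L Q
    by_cases h : (X ∩ P).Nonempty
    · rw [show sevw (X :: rest) P = X :: rest from by unfold sevw; rw [if_pos h]]
    · have hrest : ∃ Z ∈ rest, (Z ∩ P).Nonempty := by
        rcases List.mem_cons.mp hY with rfl | hY'
        · exact absurd hYP h
        · exact ⟨Y, hY', hYP⟩
      have hne : rest ≠ [] := by rintro rfl; rcases hrest with ⟨Z, hZ, _⟩; cases hZ
      obtain ⟨a, r, har⟩ : ∃ a r, sevw rest P = a :: r := by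
        cases hs : sevw rest P with
        | nil => exact absurd hs (sevw_ne_nil rest P hne)
        | cons a r => exact ⟨a, r, rfl⟩
      have hsevw : sevw (X :: rest) P = (X ∪ a) :: r := by
        unfold sevw; rw [if_neg h, har]
      have hXP : X ∩ P = ∅ := Set.not_nonempty_iff_eq_empty.mp h
      have h1 : (X ∪ a) ∩ P = a ∩ P := by
        rw [Set.union_inter_distrib_right, hXP, Set.empty_union]
      rw [hsevw]
      have hdrop : minSet ((X ∩ P) :: (rest.map (· ∩ P) ++ L)) Q
          = minSet (rest.map (· ∩ P) ++ L) Q := by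
        conv_lhs => rw [minSet]
        rw [if_neg (by simp [hXP])]
      calc minSet (((X :: rest).map (· ∩ P)) ++ L) Q
          = minSet (rest.map (· ∩ P) ++ L) Q := by
            simpa only [List.map_cons, List.cons_append] using hdrop
        _ = minSet ((sevw rest P).map (· ∩ P) ++ L) Q := ih hrest L Q
        _ = minSet ((((X ∪ a) :: r).map (· ∩ P)) ++ L) Q := by
            rw [har]; simp [h1]

/-- Moderate severe revision decomposes into severe antiwithdrawal followed by
lexicographic revision. -/
theorem msev_eq_sevw_lex (C : List (Set M)) (hC : IsPartition C) (P : Set M)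
    (hP : P.Nonempty) :
    equivC (msev C P) (lex (sevw C P) P) := by
  intro Q
  have hex : ∃ X ∈ C, (X ∩ P).Nonempty := by
    obtain ⟨m, hm⟩ := hP
    have hmem : m ∈ C.foldr (· ∪ ·) ∅ := by rw [hC.2]; exact Set.mem_univ m
    obtain ⟨X, hX, hmX⟩ := mem_foldr_union C hmem
    exact ⟨X, hX, ⟨m, hmX, hm⟩⟩
  unfold msev lex
  exact key P C hex _ Q

end BeliefRevision
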